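/- Let B ≥ 5, let j be an integer with 2 ≤ j ≤ B and (if B is even) j ≠ B/2 + 1, let κ ∈ ℝ, and let F_j(κ) := P_j(κ)²·F_B. Then every eigenvalue λ of F_j(κ) with λ ∉ {1, −1, i, −i} satisfies the quartic equation λ⁴ − (λ³(e^{2iκ} − 1)/√B)·e^{2πi(j−1)²/B} − (λ(e^{2iκ} − 1)/√B)·e^{−2πi(j−1)²/B} − e^{2iκ} = 0. -/

import Mathlib

open Matrix

noncomputable section

/-- The `B × B` Fourier transform matrix. -/
def fourierMat (B : ℕ) : Matrix (Fin B) (Fin B) ℂ :=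
  Matrix.of fun j k =>
    (1 / Real.sqrt B : ℝ) *
      Complex.exp (2 * Real.pi * Complex.I * (j : ℕ) * (k : ℕ) / B)

/-- `P_j(κ)`: the diagonal matrix whose `j`-th (1-based) diagonal entry is
`e^{iκ}` and whose other diagonal entries are `1`. -/
def Pjmat (B j : ℕ) (κ : ℝ) : Matrix (Fin B) (Fin B) ℂ :=
  Matrix.diagonal fun m =>
    if (m : ℕ) = j - 1 then Complex.exp (Complex.I * κ) else 1


lemma sum_exp_nat (B : ℕ) (hB : 0 < B) (n : ℕ) :
    ∑ k : Fin B, Complex.exp (2 * Real.pi * Complex.I * n * k / B)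
      = if B ∣ n then (B : ℂ) else 0 := by
  have hB' : (B:ℂ) ≠ 0 := Nat.cast_ne_zero.2 hB.ne'
  set ζ : ℂ := Complex.exp (2 * Real.pi * Complex.I * n / B) with hζ
  have hterm : ∀ k : Fin B, Complex.exp (2 * Real.pi * Complex.I * n * k / B) = ζ ^ (k : ℕ) := by
    intro k
    rw [hζ, ← Complex.exp_nat_mul]
    ring_nf
  have hζB : ζ ^ B = 1 := by
    rw [hζ, ← Complex.exp_nat_mul]
    have : (B : ℂ) * (2 * Real.pi * Complex.I * n / B) = n * (2 * Real.pi * Complex.I) := by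
      field_simp
    rw [this, Complex.exp_nat_mul_two_pi_mul_I]
  simp_rw [hterm]
  rw [Fin.sum_univ_eq_sum_range]
  by_cases hdvd : B ∣ n
  · obtain ⟨t, rfl⟩ := hdvd
    have : ζ = 1 := by
      rw [hζ]
      have : 2 * Real.pi * Complex.I * (↑(B * t)) / B = t * (2 * Real.pi * Complex.I) := by
        push_cast; field_simp
      rw [this, Complex.exp_nat_mul_two_pi_mul_I]
    simp [this]
  · have hζ1 : ζ ≠ 1 := by
      intro h
      rw [hζ, Complex.exp_eq_one_iff] at h
      obtain ⟨t, ht⟩ := h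
      have hpi : (2 * Real.pi * Complex.I) ≠ 0 := by
        simp [Real.pi_ne_zero, Complex.I_ne_zero, Complex.ofReal_ne_zero]
      have h2 : (2 * Real.pi * Complex.I) * (n:ℂ) = (2 * Real.pi * Complex.I) * ((t:ℂ) * B) := by
        field_simp at ht; linear_combination (2 * Real.pi * Complex.I) * ht
      have h3 : (n : ℂ) = t * B := mul_left_cancel₀ hpi h2
      have h4 : (n : ℤ) = t * B := by exact_mod_cast h3
      have : (B:ℤ) ∣ (n:ℤ) := ⟨t, by linear_combination h4⟩
      exact hdvd (by exact_mod_cast this)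
    rw [geom_sum_eq hζ1, hζB]
    simp [hdvd]






def negf {B : ℕ} (hB : 0 < B) (m : Fin B) : Fin B :=
  ⟨(B - (m:ℕ)) % B, Nat.mod_lt _ hB⟩

lemma negf_coe {B : ℕ} (hB : 0 < B) (m : Fin B) :
    ((negf hB m : Fin B) : ℕ) = (B - (m:ℕ)) % B := rfl

lemma negf_negf {B : ℕ} (hB : 0 < B) (m : Fin B) : negf hB (negf hB m) = m := by
  have hm := m.isLt
  ext
  rw [negf_coe, negf_coe]
  rcases eq_or_ne (m:ℕ) 0 with h|h
  · simp [h, Nat.mod_self]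
  · have h1 : (B - (m:ℕ)) % B = B - m := Nat.mod_eq_of_lt (by omega)
    rw [h1, Nat.mod_eq_of_lt (by omega)]
    omega

lemma dvd_iff_negf {B : ℕ} (hB : 0 < B) (m l : Fin B) :
    B ∣ ((m:ℕ) + (l:ℕ)) ↔ l = negf hB m := by
  have hm := m.isLt
  have hl := l.isLt
  rw [Fin.ext_iff, negf_coe]
  rcases eq_or_ne (m:ℕ) 0 with h|h
  · rw [h]
    simp only [Nat.zero_add, Nat.sub_zero, Nat.mod_self]
    constructor
    · intro hd
      exact Nat.eq_zero_of_dvd_of_lt hd hl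
    · intro h0
      simp [h0]
  · rw [Nat.mod_eq_of_lt (by omega)]
    constructor
    · rintro ⟨t, ht⟩
      rcases t with _|_|t
      · simp at ht; omega
      · omega
      · exfalso
        have : B * 2 ≤ B * (t + 1 + 1) := Nat.mul_le_mul_left B (by omega)
        omega
    · intro h2
      exact ⟨1, by omega⟩

lemma F2_apply (B : ℕ) (hB : 0 < B) (y : Fin B → ℂ) (m : Fin B) :
    (fourierMat B).mulVec ((fourierMat B).mulVec y) m = y (negf hB m) := by
  have hB' : (B:ℂ) ≠ 0 := Nat.cast_ne_zero.2 hB.ne'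
  simp only [mulVec, dotProduct, fourierMat, Matrix.of_apply]
  simp_rw [Finset.mul_sum]
  rw [Finset.sum_comm]
  have key : ∀ l : Fin B, ∑ k : Fin B,
      ((1 / Real.sqrt B : ℝ) : ℂ) * Complex.exp (2 * Real.pi * Complex.I * m * k / B) *
        (((1 / Real.sqrt B : ℝ) : ℂ) * Complex.exp (2 * Real.pi * Complex.I * k * l / B) * y l)
      = (if B ∣ ((m:ℕ) + (l:ℕ)) then (1:ℂ) else 0) * y l := by
    intro l
    have hsq : ((1 / Real.sqrt B : ℝ) : ℂ) * ((1 / Real.sqrt B : ℝ) : ℂ) = 1 / B := by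
      rw [← Complex.ofReal_mul]
      rw [show (1 / Real.sqrt B) * (1 / Real.sqrt B) = 1 / (Real.sqrt B * Real.sqrt B) by ring]
      rw [Real.mul_self_sqrt (Nat.cast_nonneg B)]
      simp
    have hexp : ∀ k : Fin B, Complex.exp (2 * Real.pi * Complex.I * m * k / B) *
        Complex.exp (2 * Real.pi * Complex.I * k * l / B)
        = Complex.exp (2 * Real.pi * Complex.I * ((m:ℕ) + (l:ℕ) : ℕ) * k / B) := by
      intro k
      rw [← Complex.exp_add]
      congr 1
      push_cast
      field_simp
    calc ∑ k : Fin B,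
        ((1 / Real.sqrt B : ℝ) : ℂ) * Complex.exp (2 * Real.pi * Complex.I * m * k / B) *
          (((1 / Real.sqrt B : ℝ) : ℂ) * Complex.exp (2 * Real.pi * Complex.I * k * l / B) * y l)
        = (1 / B) * (∑ k : Fin B,
            Complex.exp (2 * Real.pi * Complex.I * ((m:ℕ) + (l:ℕ) : ℕ) * k / B)) * y l := by
          rw [Finset.mul_sum, Finset.sum_mul]
          refine Finset.sum_congr rfl fun k _ => ?_
          rw [← hexp k, ← hsq]
          ring
      _ = (if B ∣ ((m:ℕ) + (l:ℕ)) then (1:ℂ) else 0) * y l := by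
          rw [sum_exp_nat B hB]
          split
          · rw [mul_comm (1/(B:ℂ))]
            field_simp
          · simp
  rw [Finset.sum_congr rfl fun l _ => key l]
  rw [Finset.sum_eq_single (negf hB m)]
  · have : B ∣ ((m:ℕ) + ((negf hB m : Fin B):ℕ)) := (dvd_iff_negf hB m _).2 rfl
    simp [this]
  · intro l _ hne
    have : ¬ B ∣ ((m:ℕ) + (l:ℕ)) := fun hd => hne ((dvd_iff_negf hB m l).1 hd)
    simp [this]
  · simp


theorem perturbed_fourier_quartic (B j : ℕ) (hB : 5 ≤ B)
    (hj2 : 2 ≤ j) (hjB : j ≤ B) (hjhalf : Even B → j ≠ B / 2 + 1)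
    (κ : ℝ) :
    ∀ lam : ℂ, lam ∉ ({1, -1, Complex.I, -Complex.I} : Set ℂ) →
      (∃ x : Fin B → ℂ, x ≠ 0 ∧
        (Pjmat B j κ * Pjmat B j κ * fourierMat B).mulVec x = lam • x) →
      lam ^ 4 -
          lam ^ 3 * (Complex.exp (2 * Complex.I * κ) - 1) /
            (Real.sqrt B : ℂ) *
            Complex.exp (2 * Real.pi * Complex.I * ((j : ℂ) - 1) ^ 2 / B) -
          lam * (Complex.exp (2 * Complex.I * κ) - 1) / (Real.sqrt B : ℂ) *
            Complex.exp (-(2 * Real.pi * Complex.I * ((j : ℂ) - 1) ^ 2 / B)) -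
          Complex.exp (2 * Complex.I * κ) = 0 := by
  rintro lam hlam ⟨x, hx0, hx⟩
  have hB0 : 0 < B := by omega
  have hBne : (B : ℂ) ≠ 0 := Nat.cast_ne_zero.2 hB0.ne'
  have hj1B : j - 1 < B := by omega
  set j0 : Fin B := ⟨j - 1, hj1B⟩ with hj0def
  -- lam^4 ≠ 1
  have hlam4 : lam ^ 4 ≠ 1 := by
    intro h4
    simp only [Set.mem_insert_iff, Set.mem_singleton_iff, not_or] at hlam
    obtain ⟨n1, n2, n3, n4⟩ := hlam
    have hprod : (lam - 1) * (lam + 1) * (lam - Complex.I) * (lam + Complex.I) = 0 := by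
      linear_combination h4 + (1 - lam ^ 2) * Complex.I_sq
    rcases mul_eq_zero.1 hprod with h | h
    · rcases mul_eq_zero.1 h with h | h
      · rcases mul_eq_zero.1 h with h | h
        · exact n1 (by linear_combination h)
        · exact n2 (by linear_combination h)
      · exact n3 (by linear_combination h)
    · exact n4 (by linear_combination h)
  -- diagonal form of Q²
  have hQQ : Pjmat B j κ * Pjmat B j κ
      = Matrix.diagonal (fun m : Fin B =>
          if (m : ℕ) = j - 1 then Complex.exp (2 * Complex.I * κ) else 1) := by
    rw [Pjmat, Matrix.diagonal_mul_diagonal]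
    refine congrArg Matrix.diagonal (funext fun m => ?_)
    by_cases h : (m : ℕ) = j - 1
    · simp only [if_pos h, ← Complex.exp_add]
      congr 1
      ring
    · simp only [if_neg h, mul_one]
  -- pointwise eigen equation
  have hxm : ∀ m : Fin B,
      (if (m : ℕ) = j - 1 then Complex.exp (2 * Complex.I * κ) else 1)
        * (fourierMat B *ᵥ x) m = lam * x m := by
    intro m
    have h := congrFun hx m
    rw [hQQ, ← Matrix.mulVec_mulVec, Matrix.mulVec_diagonal] at h
    simpa using h
  set α : ℂ := (fourierMat B *ᵥ x) j0 with hαdef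
  set c : ℂ := Complex.exp (2 * Complex.I * κ) - 1 with hcdef
  -- key vector relation
  have h1 : fourierMat B *ᵥ x = lam • x - (c * α) • (Pi.single j0 1 : Fin B → ℂ) := by
    funext m
    simp only [Pi.sub_apply, Pi.smul_apply, smul_eq_mul]
    rcases eq_or_ne m j0 with rfl | hm
    · have h := hxm j0
      rw [if_pos (by simp [hj0def])] at h
      rw [Pi.single_eq_same]
      rw [hcdef]
      linear_combination h
    · have h := hxm m
      rw [if_neg (by simpa [hj0def, Fin.ext_iff] using hm), one_mul] at h
      rw [Pi.single_eq_of_ne hm, h]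
      ring
  -- iterates
  set F := fourierMat B
  set u1 : Fin B → ℂ := F *ᵥ (Pi.single j0 1 : Fin B → ℂ) with hu1def
  set u2 : Fin B → ℂ := F *ᵥ u1 with hu2def
  set u3 : Fin B → ℂ := F *ᵥ u2 with hu3def
  set u4 : Fin B → ℂ := F *ᵥ u3 with hu4def
  set x1 : Fin B → ℂ := F *ᵥ x with hx1def
  set x2 : Fin B → ℂ := F *ᵥ x1 with hx2def
  set x3 : Fin B → ℂ := F *ᵥ x2 with hx3def
  set x4 : Fin B → ℂ := F *ᵥ x3 with hx4def
  have hF4 : ∀ z : Fin B → ℂ, F *ᵥ (F *ᵥ (F *ᵥ (F *ᵥ z))) = z := by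
    intro z
    funext m
    show (fourierMat B *ᵥ (fourierMat B *ᵥ (fourierMat B *ᵥ (fourierMat B *ᵥ z)))) m = z m
    rw [F2_apply B hB0, F2_apply B hB0, negf_negf]
  have hx4x : x4 = x := by
    rw [hx4def, hx3def, hx2def, hx1def]; exact hF4 x
  have hlin : ∀ (a b : ℂ) (v w : Fin B → ℂ),
      F *ᵥ (a • v - b • w) = a • (F *ᵥ v) - b • (F *ᵥ w) := by
    intro a b v w
    rw [Matrix.mulVec_sub, Matrix.mulVec_smul, Matrix.mulVec_smul]
  have h2 : x2 = lam • x1 - (c * α) • u1 := by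
    rw [hx2def]; conv_lhs => rw [h1]
    rw [hlin]
  have h3 : x3 = lam • x2 - (c * α) • u2 := by
    rw [hx3def]; conv_lhs => rw [h2]
    rw [hlin]
  have h4 : x4 = lam • x3 - (c * α) • u3 := by
    rw [hx4def]; conv_lhs => rw [h3]
    rw [hlin]
  have h5 : x1 = lam • x4 - (c * α) • u4 := by
    rw [hx1def]
    conv_lhs => rw [← hx4x, h4]
    rw [hlin]
  -- α ≠ 0
  have hα : α ≠ 0 := by
    intro hα0
    have hz : (c * α) = 0 := by rw [hα0, mul_zero]
    have k1 : x1 = lam • x := by rw [h1, hz, zero_smul, sub_zero]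
    have k2 : x2 = lam • x1 := by rw [h2, hz, zero_smul, sub_zero]
    have k3 : x3 = lam • x2 := by rw [h3, hz, zero_smul, sub_zero]
    have k4 : x4 = lam • x3 := by rw [h4, hz, zero_smul, sub_zero]
    have k : x = lam ^ 4 • x := by
      conv_lhs => rw [← hx4x, k4, k3, k2, k1]
      rw [smul_smul, smul_smul, smul_smul,
        show lam * lam * lam * lam = lam ^ 4 from by ring]
    have : (lam ^ 4 - 1) • x = 0 := by
      rw [sub_smul, one_smul]
      rw [← k, sub_self]
    rcases smul_eq_zero.mp this with h | h
    · exact hlam4 (by linear_combination h)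
    · exact hx0 h
  -- negation of j0
  have hnegj0 : negf hB0 j0 = ⟨B - (j - 1), by omega⟩ := by
    ext
    rw [negf_coe]
    show (B - (j - 1)) % B = B - (j - 1)
    exact Nat.mod_eq_of_lt (by omega)
  have hnegne : negf hB0 j0 ≠ j0 := by
    rw [hnegj0]
    have h2jB : 2 * (j - 1) ≠ B := by
      rcases Nat.even_or_odd B with he | ho
      · have := hjhalf he
        obtain ⟨t, ht⟩ := he
        omega
      · obtain ⟨t, ht⟩ := ho
        omega
    rw [Ne, Fin.ext_iff]
    show ¬ (B - (j - 1) = j - 1)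
    omega
  -- values of the u-iterates at j0
  have hcast1 : ((j - 1 : ℕ) : ℂ) = (j : ℂ) - 1 := by
    push_cast [Nat.cast_sub (by omega : 1 ≤ j)]
    ring
  have hsqrt : ((1 / Real.sqrt B : ℝ) : ℂ) = 1 / (Real.sqrt B : ℂ) := by
    push_cast
    ring
  have hu1v : u1 j0 = 1 / (Real.sqrt B : ℂ)
      * Complex.exp (2 * Real.pi * Complex.I * ((j : ℂ) - 1) ^ 2 / B) := by
    rw [hu1def]
    show (fourierMat B *ᵥ Pi.single j0 1) j0 = _
    rw [Matrix.mulVec_single_one, Matrix.col_apply]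
    simp only [fourierMat, Matrix.of_apply, mul_one]
    rw [hsqrt]
    congr 2
    show (2 * (Real.pi:ℂ) * Complex.I * ((j - 1 : ℕ) : ℂ) * ((j - 1 : ℕ) : ℂ) / B : ℂ) = _
    rw [hcast1]
    ring
  have hu2v : u2 j0 = 0 := by
    rw [hu2def, hu1def]
    show (fourierMat B *ᵥ (fourierMat B *ᵥ Pi.single j0 1)) j0 = 0
    rw [F2_apply B hB0]
    exact Pi.single_eq_of_ne hnegne 1
  have hu3v : u3 j0 = 1 / (Real.sqrt B : ℂ)
      * Complex.exp (-(2 * Real.pi * Complex.I * ((j : ℂ) - 1) ^ 2 / B)) := by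
    rw [hu3def, hu2def]
    show (fourierMat B *ᵥ (fourierMat B *ᵥ u1)) j0 = _
    rw [F2_apply B hB0]
    rw [hu1def]
    show (fourierMat B *ᵥ Pi.single j0 1) (negf hB0 j0) = _
    rw [Matrix.mulVec_single_one, Matrix.col_apply]
    simp only [fourierMat, Matrix.of_apply, mul_one]
    rw [hsqrt, hnegj0]
    congr 1
    show Complex.exp (2 * Real.pi * Complex.I * ((B - (j-1) : ℕ) : ℂ) * ((j-1 : ℕ) : ℂ) / B) = _
    have hcast2 : ((B - (j - 1) : ℕ) : ℂ) = (B : ℂ) - ((j : ℂ) - 1) := by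
      rw [Nat.cast_sub (by omega : j - 1 ≤ B), hcast1]
    rw [hcast2]
    have harg : 2 * Real.pi * Complex.I * ((B : ℂ) - ((j : ℂ) - 1)) * (((j:ℕ) - 1 : ℕ) : ℂ) / B
        = -(2 * Real.pi * Complex.I * ((j : ℂ) - 1) ^ 2 / B)
          + (((j:ℕ) - 1 : ℕ) : ℂ) * (2 * Real.pi * Complex.I) := by
      rw [hcast1]
      field_simp
      ring
    rw [harg, Complex.exp_add, Complex.exp_nat_mul_two_pi_mul_I, mul_one]
  have hu4v : u4 j0 = 1 := by
    rw [hu4def, hu3def, hu2def, hu1def]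
    show (fourierMat B *ᵥ (fourierMat B *ᵥ (fourierMat B *ᵥ (fourierMat B *ᵥ Pi.single j0 1)))) j0 = 1
    rw [F2_apply B hB0, F2_apply B hB0, negf_negf]
    exact Pi.single_eq_same j0 1
  -- evaluate the iterate relations at j0
  have e2 := congrFun h2 j0
  have e3 := congrFun h3 j0
  have e4 := congrFun h4 j0
  have e5 := congrFun h5 j0
  simp only [Pi.sub_apply, Pi.smul_apply, smul_eq_mul, hu1v, hu2v, hu3v, hu4v] at e2 e3 e4 e5
  have HH : x1 j0 = lam ^ 4 * x1 j0
      - c * α * lam ^ 3 * (1 / (Real.sqrt B : ℂ)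
          * Complex.exp (2 * Real.pi * Complex.I * ((j : ℂ) - 1) ^ 2 / B))
      - c * α * lam * (1 / (Real.sqrt B : ℂ)
          * Complex.exp (-(2 * Real.pi * Complex.I * ((j : ℂ) - 1) ^ 2 / B)))
      - c * α := by
    linear_combination e5 + lam * e4 + lam ^ 2 * e3 + lam ^ 3 * e2
  have hαx1 : x1 j0 = α := by rw [hx1def, hαdef]
  rw [hαx1] at HH
  have hgoal : α * (lam ^ 4 -
      lam ^ 3 * (Complex.exp (2 * Complex.I * κ) - 1) / (Real.sqrt B : ℂ) *
        Complex.exp (2 * Real.pi * Complex.I * ((j : ℂ) - 1) ^ 2 / B) -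
      lam * (Complex.exp (2 * Complex.I * κ) - 1) / (Real.sqrt B : ℂ) *
        Complex.exp (-(2 * Real.pi * Complex.I * ((j : ℂ) - 1) ^ 2 / B)) -
      Complex.exp (2 * Complex.I * κ)) = 0 := by
    rw [hcdef] at HH
    linear_combination -HH
  exact (mul_eq_zero.mp hgoal).resolve_left hα

end
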